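/- Let 𝓗 : ℝ² → ℝ be positive, positively 2-homogeneous, and C¹, and suppose z : [a,b] → ℝ² \ {0} is a C¹ solution of Jż = α(t)∇𝓗₁(z) + (1-α(t))∇𝓗₂(z) with 0 ≤ α ≤ 1, where 𝓗₁ ≤ 𝓗₂ are both positive and positively 2-homogeneous. Writing z(t) = ρ(t)(cos θ(t), sin θ(t)) in polar coordinates, the angular velocity satisfies -θ̇(t) = 2α(t)𝓗₁(cos θ(t), sin θ(t)) + 2(1-α(t))𝓗₂(cos θ(t), sin θ(t)) for almost every t; in particular θ is strictly decreasing. -/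

import Mathlib

open MeasureTheory

/-- The standard symplectic matrix `J` acting on ℝ². -/
noncomputable def Jmap (w : EuclideanSpace ℝ (Fin 2)) : EuclideanSpace ℝ (Fin 2) :=
  (WithLp.equiv 2 (Fin 2 → ℝ)).symm ![-(w 1), w 0]

/-- The unit-circle parametrization `θ ↦ (cos θ, sin θ)`. -/
noncomputable def uc (θ : ℝ) : EuclideanSpace ℝ (Fin 2) :=
  (WithLp.equiv 2 (Fin 2 → ℝ)).symm ![Real.cos θ, Real.sin θ]

lemma Jmap0 (x : EuclideanSpace ℝ (Fin 2)) : Jmap x 0 = -(x 1) := by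
  simp [Jmap, WithLp.equiv_symm_apply, PiLp.toLp_apply]
lemma Jmap1 (x : EuclideanSpace ℝ (Fin 2)) : Jmap x 1 = x 0 := by
  simp [Jmap, WithLp.equiv_symm_apply, PiLp.toLp_apply]
lemma uc0 (φ : ℝ) : uc φ 0 = Real.cos φ := by simp [uc, WithLp.equiv_symm_apply, PiLp.toLp_apply]
lemma uc1 (φ : ℝ) : uc φ 1 = Real.sin φ := by simp [uc, WithLp.equiv_symm_apply, PiLp.toLp_apply]

lemma inner2 (x y : EuclideanSpace ℝ (Fin 2)) : (inner ℝ x y : ℝ) = x 0 * y 0 + x 1 * y 1 := by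
  simp [PiLp.inner_apply, Fin.sum_univ_two, mul_comm]

lemma hasDerivAt_uc (φ : ℝ) : HasDerivAt uc (Jmap (uc φ)) φ := by
  have hf : HasDerivAt (fun θ : ℝ => (![Real.cos θ, Real.sin θ] : Fin 2 → ℝ))
      ![-(Real.sin φ), Real.cos φ] φ := by
    rw [hasDerivAt_pi]
    intro i
    fin_cases i
    · simpa using (Real.hasDerivAt_cos φ)
    · simpa using (Real.hasDerivAt_sin φ)
  have := ((PiLp.continuousLinearEquiv 2 ℝ (fun _ : Fin 2 => ℝ)).symm :
      (Fin 2 → ℝ) →L[ℝ] EuclideanSpace ℝ (Fin 2)).hasFDerivAt.comp_hasDerivAt φ hf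
  have h2 : Jmap (uc φ) = ((PiLp.continuousLinearEquiv 2 ℝ (fun _ : Fin 2 => ℝ)).symm :
      (Fin 2 → ℝ) →L[ℝ] EuclideanSpace ℝ (Fin 2)) ![-(Real.sin φ), Real.cos φ] := by
    ext i; fin_cases i <;> simp [Jmap0, Jmap1, uc0, uc1, WithLp.equiv_symm_apply, PiLp.toLp_apply]
  rw [h2]
  exact this

lemma euler (H : EuclideanSpace ℝ (Fin 2) → ℝ) (hC1 : ContDiff ℝ 1 H)
    (hhom : ∀ w : EuclideanSpace ℝ (Fin 2), w ≠ 0 → ∀ lam : ℝ, 0 < lam →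
      0 < H (lam • w) ∧ H (lam • w) = lam ^ 2 * H w)
    (w : EuclideanSpace ℝ (Fin 2)) (hw : w ≠ 0) :
    (inner ℝ (gradient H w) w : ℝ) = 2 * H w := by
  have hsm : HasDerivAt (fun l : ℝ => l • w) w 1 := by
    simpa using (hasDerivAt_id (1:ℝ)).smul_const w
  have hF : HasFDerivAt H (fderiv ℝ H w) w :=
    (hC1.differentiable one_ne_zero w).hasFDerivAt
  have hd : HasDerivAt (fun l : ℝ => H (l • w)) (fderiv ℝ H w w) 1 := by
    have hF' : HasFDerivAt H (fderiv ℝ H w) ((1:ℝ) • w) := by rwa [one_smul]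
    have := hF'.comp_hasDerivAt 1 hsm
    exact this
  have he : (fun l : ℝ => l ^ 2 * H w) =ᶠ[nhds (1:ℝ)] (fun l : ℝ => H (l • w)) := by
    filter_upwards [eventually_gt_nhds (by norm_num : (0:ℝ) < 1)] with l hl
    exact ((hhom w hw l hl).2).symm
  have hd2 : HasDerivAt (fun l : ℝ => H (l • w)) (2 * H w) 1 := by
    have : HasDerivAt (fun l : ℝ => l ^ 2 * H w) (2 * H w) 1 := by
      simpa using (hasDerivAt_pow 2 (1:ℝ)).mul_const (H w)
    exact this.congr_of_eventuallyEq he.symm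
  have : fderiv ℝ H w w = 2 * H w := hd.unique hd2
  rw [← this]
  simp [gradient, InnerProductSpace.toDual_symm_apply]

lemma huc_ne (φ : ℝ) : uc φ ≠ 0 := by
  intro h
  have h0 : (inner ℝ (uc φ) (uc φ) : ℝ) = 1 := by
    rw [inner2, uc0, uc1]
    nlinarith [Real.sin_sq_add_cos_sq φ]
  rw [h] at h0
  simp at h0

lemma JJ (x : EuclideanSpace ℝ (Fin 2)) : Jmap (Jmap x) = -x := by
  ext i
  fin_cases i <;> simp [Jmap0, Jmap1]

lemma Juc (φ : ℝ) : Jmap (uc φ) = uc (φ + Real.pi/2) := by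
  ext i
  fin_cases i <;>
    simp [Jmap0, Jmap1, uc0, uc1, Real.cos_add, Real.sin_add]

lemma hskew (x y : EuclideanSpace ℝ (Fin 2)) :
    (inner ℝ (Jmap x) y : ℝ) = -(inner ℝ x (Jmap y) : ℝ) := by
  rw [inner2, inner2]
  simp only [Jmap0, Jmap1]
  ring


/-- Angular velocity identity in polar coordinates for solutions of the
convex-combination system; in particular the angle is strictly decreasing. -/
theorem angular_velocity
    (H₁ H₂ : EuclideanSpace ℝ (Fin 2) → ℝ)
    (hC1₁ : ContDiff ℝ 1 H₁) (hC1₂ : ContDiff ℝ 1 H₂)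
    (hhom₁ : ∀ w : EuclideanSpace ℝ (Fin 2), w ≠ 0 → ∀ lam : ℝ, 0 < lam →
      0 < H₁ (lam • w) ∧ H₁ (lam • w) = lam ^ 2 * H₁ w)
    (hhom₂ : ∀ w : EuclideanSpace ℝ (Fin 2), w ≠ 0 → ∀ lam : ℝ, 0 < lam →
      0 < H₂ (lam • w) ∧ H₂ (lam • w) = lam ^ 2 * H₂ w)
    (hle : ∀ w, H₁ w ≤ H₂ w)
    (a b : ℝ) (hab : a < b)
    (z z' : ℝ → EuclideanSpace ℝ (Fin 2))
    (α : ℝ → ℝ) (hα : ∀ t, α t ∈ Set.Icc (0 : ℝ) 1)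
    (hz : ∀ t ∈ Set.Icc a b, HasDerivAt z (z' t) t)
    (hz0 : ∀ t ∈ Set.Icc a b, z t ≠ 0)
    (hODE : ∀ t ∈ Set.Icc a b,
      Jmap (z' t) = α t • gradient H₁ (z t) + (1 - α t) • gradient H₂ (z t))
    (ρ θ θ' : ℝ → ℝ)
    (hρpos : ∀ t ∈ Set.Icc a b, 0 < ρ t)
    (hpolar : ∀ t ∈ Set.Icc a b, z t = ρ t • uc (θ t))
    (hθ : ∀ t ∈ Set.Icc a b, HasDerivAt θ (θ' t) t) :
    (∀ᵐ t ∂(volume.restrict (Set.Icc a b)),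
      -θ' t = 2 * α t * H₁ (uc (θ t)) + 2 * (1 - α t) * H₂ (uc (θ t))) ∧
    StrictAntiOn θ (Set.Icc a b) := by

  have key : ∀ t ∈ Set.Ioo a b,
      -θ' t = 2 * α t * H₁ (uc (θ t)) + 2 * (1 - α t) * H₂ (uc (θ t)) := by
    intro t ht
    have htI : t ∈ Set.Icc a b := Set.Ioo_subset_Icc_self ht
    set w := uc (θ t) with hwdef
    have hwne : w ≠ 0 := huc_ne _
    have hρ := hρpos t htI
    have hzt : z t = ρ t • w := hpolar t htI
    -- derivative of s ↦ Jmap (uc (θ s))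
    have hw2 : HasDerivAt (fun s => Jmap (uc (θ s))) ((-θ' t) • w) t := by
      have h1 : HasDerivAt (fun s => uc (θ s + Real.pi/2))
          (θ' t • Jmap (uc (θ t + Real.pi/2))) t :=
        (hasDerivAt_uc _).scomp t ((hθ t htI).add_const _)
      have h2 : (fun s => uc (θ s + Real.pi/2)) = fun s => Jmap (uc (θ s)) := by
        funext s; rw [Juc]
      rw [h2, ← Juc, JJ] at h1
      convert h1 using 1
      rw [← hwdef, smul_neg, neg_smul]
    -- the function ⟪z, J uc θ⟫ vanishes near t
    have hg : HasDerivAt (fun s => (inner ℝ (z s) (Jmap (uc (θ s))) : ℝ))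
        ((inner ℝ (z t) ((-θ' t) • w) : ℝ) + (inner ℝ (z' t) (Jmap (uc (θ t))) : ℝ)) t :=
      HasDerivAt.inner ℝ (hz t htI) hw2
    have hzero : (fun s => (inner ℝ (z s) (Jmap (uc (θ s))) : ℝ)) =ᶠ[nhds t] (fun _ => (0:ℝ)) := by
      filter_upwards [Icc_mem_nhds ht.1 ht.2] with s hs
      rw [hpolar s hs, inner2]
      simp [uc0, uc1, Jmap0, Jmap1, PiLp.smul_apply, smul_eq_mul]
      ring
    have hD : (inner ℝ (z t) ((-θ' t) • w) : ℝ) + (inner ℝ (z' t) (Jmap w) : ℝ) = 0 := by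
      have h0 : HasDerivAt (fun _ : ℝ => (0:ℝ))
          ((inner ℝ (z t) ((-θ' t) • w) : ℝ) + (inner ℝ (z' t) (Jmap (uc (θ t))) : ℝ)) t :=
        hg.congr_of_eventuallyEq hzero.symm
      have := h0.unique (hasDerivAt_const t 0)
      rw [← hwdef] at this
      exact this
    have hww : (inner ℝ w w : ℝ) = 1 := by
      rw [hwdef, inner2, uc0, uc1]; nlinarith [Real.sin_sq_add_cos_sq (θ t)]
    have hzw : (inner ℝ (z t) w : ℝ) = ρ t := by
      rw [hzt, real_inner_smul_left, hww, mul_one]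
    have hA : (inner ℝ (z' t) (Jmap w) : ℝ) = θ' t * ρ t := by
      have : (inner ℝ (z t) ((-θ' t) • w) : ℝ) = -θ' t * ρ t := by
        rw [real_inner_smul_right, hzw]
      rw [this] at hD; linarith
    -- Euler scaled: ⟪∇H (z t), w⟫ = 2 ρ H w
    have hgrad : ∀ (H : EuclideanSpace ℝ (Fin 2) → ℝ), ContDiff ℝ 1 H →
        (∀ w : EuclideanSpace ℝ (Fin 2), w ≠ 0 → ∀ lam : ℝ, 0 < lam →
          0 < H (lam • w) ∧ H (lam • w) = lam ^ 2 * H w) →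
        (inner ℝ (gradient H (z t)) w : ℝ) = 2 * ρ t * H w := by
      intro H hC1 hhom
      have he : (inner ℝ (gradient H (z t)) (z t) : ℝ) = 2 * H (z t) :=
        euler H hC1 hhom (z t) (hz0 t htI)
      have hHz : H (z t) = ρ t ^ 2 * H w := by rw [hzt]; exact (hhom w hwne (ρ t) hρ).2
      rw [hzt, real_inner_smul_right] at he
      have : (inner ℝ (gradient H (ρ t • w)) w : ℝ) = 2 * ρ t * H w := by
        have hρne : ρ t ≠ 0 := ne_of_gt hρ
        rw [hzt] at hHz
        field_simp at he ⊢
        nlinarith [he, hHz]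
      rw [hzt]; exact this
    have hg1 := hgrad H₁ hC1₁ hhom₁
    have hg2 := hgrad H₂ hC1₂ hhom₂
    -- plug into ODE
    have hODEt := hODE t htI
    have hOin : (inner ℝ (Jmap (z' t)) w : ℝ) =
        α t * (2 * ρ t * H₁ w) + (1 - α t) * (2 * ρ t * H₂ w) := by
      rw [hODEt, inner_add_left, real_inner_smul_left, real_inner_smul_left, hg1, hg2]
    rw [hskew, hA] at hOin
    have hρne : ρ t ≠ 0 := ne_of_gt hρ
    have : ρ t * (-θ' t) = ρ t * (2 * α t * H₁ w + 2 * (1 - α t) * H₂ w) := by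
      linear_combination hOin
    exact mul_left_cancel₀ hρne this
  constructor
  · have hres : volume.restrict (Set.Icc a b) = volume.restrict (Set.Ioo a b) :=
      (Measure.restrict_congr_set Ioo_ae_eq_Icc).symm
    rw [hres]
    exact Filter.eventually_of_mem (self_mem_ae_restrict measurableSet_Ioo) key
  · have hcont : ContinuousOn θ (Set.Icc a b) := fun t ht =>
      (hθ t ht).continuousAt.continuousWithinAt
    apply strictAntiOn_of_deriv_neg (convex_Icc a b) hcont
    intro t ht
    rw [interior_Icc] at ht
    rw [(hθ t (Set.Ioo_subset_Icc_self ht)).deriv]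
    have hk := key t ht
    have h1 : 0 < H₁ (uc (θ t)) := by
      have := (hhom₁ (uc (θ t)) (huc_ne _) 1 one_pos).1
      simpa using this
    have h2 : 0 < H₂ (uc (θ t)) := by
      have := (hhom₂ (uc (θ t)) (huc_ne _) 1 one_pos).1
      simpa using this
    have hα0 := (hα t).1
    have hα1 := (hα t).2
    have hsub : (0:ℝ) ≤ (1 - α t) * (H₂ (uc (θ t)) - H₁ (uc (θ t))) :=
      mul_nonneg (by linarith) (sub_nonneg.mpr (hle _))
    nlinarith [hk, h1, h2, hα0, hα1, hsub]
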